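/- Let R be a finite ring with unity, let χ be an additive character of R, let x ∈ R, and let K be the largest left ideal of R contained in (x)_ℓ ∩ {y ∈ R : χ(y) = 1}. Then: (a) if K = (x)_ℓ, then C_χ(x) = |[x]_ℓ|; (b) if K ≠ (x)_ℓ and K can be expressed as an intersection of some maximal R-left ideals of (x)_ℓ, then C_χ(x) = Σ_{E ⊆ M_R((x)_ℓ) with ⋂_{M∈E} M ⊆ K} (−1)^{|E|} · |⋂_{M∈E} M|; (c) otherwise C_χ(x) = 0. -/

import Mathlib

open scoped BigOperators
open Classical

variable {R : Type*}

/-- The left ideal of `R` generated by `x`, i.e. `(x)_ℓ`. -/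
def lgen [Ring R] (x : R) : Submodule R R := Submodule.span R {x}

/-- `[x]_ℓ = {y : (y)_ℓ = (x)_ℓ}`. -/
def classL [Ring R] (x : R) : Set R := {y | lgen y = lgen x}

/-- The character sum `C_χ(x) = ∑_{s ∈ [x]_ℓ} χ(s)`. -/
noncomputable def CchiL [Ring R] (χ : AddChar R ℂ) (x : R) : ℂ :=
  ∑ᶠ s ∈ classL x, χ s

/-- The set `M_R(J)` of maximal `R`-left ideals of `J`. -/
def maxROf [Ring R] (J : Submodule R R) : Set (Submodule R R) :=
  {M | M < J ∧ ∀ I' : Submodule R R, M < I' → ¬ I' < J}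

/-- Intersection of the family `E` of left ideals, with the convention that the
empty intersection is `J`. -/
noncomputable def interIn [Ring R] (J : Submodule R R) (E : Set (Submodule R R)) : Submodule R R :=
  if E = ∅ then J else sInf E

set_option linter.unusedSectionVars false

section Aux
variable [Ring R] [Fintype R]

lemma mem_lgen_self (x : R) : x ∈ lgen x := Submodule.mem_span_singleton_self x

lemma lgen_le_iff {y : R} {I : Submodule R R} : lgen y ≤ I ↔ y ∈ I :=
  Submodule.span_singleton_le_iff_mem y I

lemma maxROf_iff {J M : Submodule R R} : M ∈ maxROf J ↔ M ⋖ J := by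
  constructor
  · rintro ⟨h1, h2⟩; exact ⟨h1, fun c hc => h2 c hc⟩
  · rintro ⟨h1, h2⟩; exact ⟨h1, fun c hc => h2 hc⟩

lemma exists_coatom_between {P J : Submodule R R} (h : P < J) :
    ∃ M ∈ maxROf J, P ≤ M := by
  obtain ⟨M, hM, hmax⟩ := Set.Finite.exists_maximalFor id {Q : Submodule R R | P ≤ Q ∧ Q < J}
    (Set.toFinite _) ⟨P, le_refl P, h⟩
  refine ⟨M, maxROf_iff.2 ⟨hM.2, fun c hc hcJ => ?_⟩, hM.1⟩
  have := le_antisymm hc.le (@hmax c ⟨hM.1.trans hc.le, hcJ⟩ hc.le)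
  exact hc.ne (id this)

/-- Step A: the interval `[N, J]` is complemented, where `N = sInf (maxROf J)`. -/
lemma step_complement {J W : Submodule R R} (hMne : (maxROf J).Nonempty)
    (hNW : sInf (maxROf J) ≤ W) (hWJ : W ≤ J) :
    ∃ C, sInf (maxROf J) ≤ C ∧ C ≤ J ∧ W ⊓ C = sInf (maxROf J) ∧ W ⊔ C = J := by
  set N := sInf (maxROf J) with hNdef
  have hNJ : N ≤ J := by
    obtain ⟨M, hM⟩ := hMne
    exact (sInf_le hM).trans (maxROf_iff.1 hM).1.le
  obtain ⟨C, hC, hmin⟩ := Set.Finite.exists_minimalFor id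
    {C : Submodule R R | N ≤ C ∧ C ≤ J ∧ W ⊔ C = J} (Set.toFinite _)
    ⟨J, hNJ, le_refl J, sup_eq_right.2 hWJ⟩
  obtain ⟨hNC, hCJ, hWC⟩ := hC
  -- superfluity
  have hsup : ∀ X : Submodule R R, N ≤ X → X ≤ C → (W ⊓ C) ⊔ X = C → X = C := by
    intro X hNX hXC hX
    have : W ⊔ X = J := by
      rw [← hWC, ← hX, ← sup_assoc, sup_eq_left.2 (inf_le_left : W ⊓ C ≤ W)]
    exact le_antisymm hXC (@hmin X ⟨hNX, hXC.trans hCJ, this⟩ hXC)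
  -- W ⊓ C below every coatom
  have hWCM : ∀ M ∈ maxROf J, W ⊓ C ≤ M := by
    intro M hM
    by_cases hCM : C ≤ M
    · exact inf_le_right.trans hCM
    set m := M ⊓ C with hmdef
    have hmC : m < C := lt_of_le_of_ne inf_le_right (fun h => hCM (h ▸ inf_le_left))
    have hcov : ∀ Y : Submodule R R, m < Y → Y ≤ C → Y = C := by
      intro Y hmY hYC
      have hYM : ¬ Y ≤ M := fun h => hmY.not_ge (le_inf h hYC)
      have hMJ : M ⊔ Y = J := by
        have h1 : M < M ⊔ Y := lt_of_le_of_ne le_sup_left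
          (fun h => hYM (h ▸ le_sup_right))
        have h2 : M ⊔ Y ≤ J := sup_le (maxROf_iff.1 hM).1.le (hYC.trans hCJ)
        by_contra hne
        exact (maxROf_iff.1 hM).2 h1 (lt_of_le_of_ne h2 hne)
      calc Y = Y ⊔ (M ⊓ C) := (sup_eq_left.2 hmY.le).symm
        _ = (Y ⊔ M) ⊓ C := (sup_inf_assoc_of_le M hYC).symm
        _ = J ⊓ C := by rw [sup_comm, hMJ]
        _ = C := inf_eq_right.2 hCJ
    by_contra hWCm
    have hWCm' : ¬ (W ⊓ C ≤ m) := fun h => hWCm (h.trans inf_le_left)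
    have hNm : N ≤ m := le_inf (sInf_le hM) hNC
    have hX : m ⊔ (W ⊓ C) = C := by
      apply hcov
      · exact lt_of_le_of_ne le_sup_left (fun h => hWCm' (h ▸ le_sup_right))
      · exact sup_le inf_le_right inf_le_right
    have := hsup m hNm inf_le_right (by rw [sup_comm] at hX; exact hX)
    exact hmC.ne this
  refine ⟨C, hNC, hCJ, le_antisymm (le_sInf (fun M hM => hWCM M hM)) (le_inf hNW hNC), hWC⟩



/-- Step B: relative complements in intervals above `sInf (maxROf J)`. -/
lemma step_relcomplement {J a x b : Submodule R R} (hMne : (maxROf J).Nonempty)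
    (hNa : sInf (maxROf J) ≤ a) (hax : a ≤ x) (hxb : x ≤ b) (hbJ : b ≤ J) :
    ∃ y, a ≤ y ∧ y ≤ b ∧ x ⊓ y = a ∧ x ⊔ y = b := by
  obtain ⟨c, hNc, hcJ, hxc, hxcJ⟩ := step_complement hMne (hNa.trans hax) (hxb.trans hbJ)
  refine ⟨a ⊔ (c ⊓ b), le_sup_left, sup_le (hax.trans hxb) inf_le_right, ?_, ?_⟩
  · rw [inf_comm, sup_inf_assoc_of_le _ hax]
    refine sup_eq_left.2 ?_
    have h1 : c ⊓ b ⊓ x ≤ x ⊓ c := le_inf inf_le_right (inf_le_left.trans inf_le_left)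
    rw [hxc] at h1
    exact h1.trans hNa
  · rw [← sup_assoc, sup_eq_left.2 hax, ← sup_inf_assoc_of_le _ hxb, hxcJ]
    exact inf_eq_right.2 hbJ

/-- Step C: a coatom over `K` avoiding `z`, when `sInf (maxROf J) ≤ K`. -/
lemma step_coatom {J K : Submodule R R} (hMne : (maxROf J).Nonempty)
    (hNK : sInf (maxROf J) ≤ K) (hKJ : K ≤ J) {z : R} (hzJ : z ∈ J) (hzK : z ∉ K) :
    ∃ M ∈ maxROf J, K ≤ M ∧ z ∉ M := by
  obtain ⟨M, hM, hmax⟩ := Set.Finite.exists_maximalFor id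
    {P : Submodule R R | K ≤ P ∧ P ≤ J ∧ z ∉ P} (Set.toFinite _) ⟨K, le_refl K, hKJ, hzK⟩
  obtain ⟨hKM, hMJ, hzM⟩ := hM
  have hMltJ : M < J := lt_of_le_of_ne hMJ (fun h => hzM (h ▸ hzJ))
  have habove : ∀ P : Submodule R R, M < P → P ≤ J → M ⊔ lgen z ≤ P := by
    intro P hMP hPJ
    have hzP : z ∈ P := by
      by_contra hzP
      exact hMP.ne (le_antisymm hMP.le (@hmax P ⟨hKM.trans hMP.le, hPJ, hzP⟩ hMP.le))
    exact sup_le hMP.le (lgen_le_iff.2 hzP)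
  have hMplus_le : M ⊔ lgen z ≤ J := sup_le hMJ (lgen_le_iff.2 hzJ)
  have hMplus_gt : M < M ⊔ lgen z := by
    refine lt_of_le_of_ne le_sup_left (fun h => hzM ?_)
    have : lgen z ≤ M := by rw [h]; exact le_sup_right
    exact lgen_le_iff.1 this
  obtain ⟨y, hMy, hyJ, hinf, hsup2⟩ := step_relcomplement hMne (hNK.trans hKM)
    hMplus_gt.le hMplus_le (le_refl J)
  have hyM : y = M := by
    by_contra h
    have hlt : M < y := lt_of_le_of_ne hMy (Ne.symm h)
    have h2 : M ⊔ lgen z ≤ y := habove y hlt hyJ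
    have h3 : M ⊔ lgen z ≤ (M ⊔ lgen z) ⊓ y := le_inf le_rfl h2
    rw [hinf] at h3
    exact hMplus_gt.not_ge h3
  have hplusJ : M ⊔ lgen z = J := by
    rw [hyM, show (M ⊔ lgen z) ⊔ M = M ⊔ lgen z from sup_eq_left.2 le_sup_left] at hsup2
    exact hsup2
  refine ⟨M, maxROf_iff.2 ⟨hMltJ, fun c hc hcJ => ?_⟩, hKM, hzM⟩
  have := habove c hc hcJ.le
  rw [hplusJ] at this
  exact hcJ.not_ge this

/-- Key: if `sInf (maxROf J) ≤ K < J` then `K` is the intersection of the coatoms above it. -/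
lemma key_inter {J K : Submodule R R} (hMne : (maxROf J).Nonempty)
    (hNK : sInf (maxROf J) ≤ K) (hKJ : K < J) :
    {M | M ∈ maxROf J ∧ K ≤ M}.Nonempty ∧ sInf {M | M ∈ maxROf J ∧ K ≤ M} = K := by
  obtain ⟨M₀, hM₀, hKM₀⟩ := exists_coatom_between hKJ
  refine ⟨⟨M₀, hM₀, hKM₀⟩, le_antisymm ?_ (le_sInf (fun M hM => hM.2))⟩
  intro z hz
  by_contra hzK
  have hzJ : z ∈ J := (maxROf_iff.1 hM₀).1.le (Submodule.mem_sInf.1 hz M₀ ⟨hM₀, hKM₀⟩)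
  obtain ⟨M, hM, hKM, hzM⟩ := step_coatom hMne hNK hKJ.le hzJ hzK
  exact hzM (Submodule.mem_sInf.1 hz M ⟨hM, hKM⟩)


noncomputable def finOf (s : Set R) : Finset R := (Set.toFinite s).toFinset

lemma mem_finOf {s : Set R} {a : R} : a ∈ finOf s ↔ a ∈ s := Set.Finite.mem_toFinset _

lemma card_finOf (I : Submodule R R) : (finOf (I : Set R)).card = Nat.card I := by
  rw [finOf, ← Set.ncard_eq_toFinset_card _ (Set.toFinite _)]
  exact (Nat.card_coe_set_eq _).symm

lemma char_sum (χ : AddChar R ℂ) {I K J : Submodule R R}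
    (hK : (K : Set R) ⊆ (J : Set R) ∩ {y | χ y = 1})
    (hKmax : ∀ L : Submodule R R, (L : Set R) ⊆ (J : Set R) ∩ {y | χ y = 1} → L ≤ K)
    (hIJ : I ≤ J) :
    ∑ s ∈ finOf (I : Set R), χ s = if I ≤ K then (Nat.card I : ℂ) else 0 := by
  by_cases h : I ≤ K
  · rw [if_pos h]
    rw [Finset.sum_congr rfl (fun s hs => (hK (h (mem_finOf.1 hs)) : _).2),
      Finset.sum_const, nsmul_eq_mul, mul_one, card_finOf]
  · rw [if_neg h]
    have hns : ¬ ((I : Set R) ⊆ (J : Set R) ∩ {y | χ y = 1}) := fun hc => h (hKmax I hc)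
    obtain ⟨t, htI, ht⟩ : ∃ t ∈ I, χ t ≠ 1 := by
      by_contra hc
      push_neg at hc
      exact hns (fun y hy => ⟨hIJ hy, hc y hy⟩)
    have hinv : (∑ s ∈ finOf (I : Set R), χ s) * χ t = ∑ s ∈ finOf (I : Set R), χ s := by
      rw [Finset.sum_mul]
      refine Finset.sum_equiv (Equiv.addRight t) (fun i => ?_) (fun i hi => ?_)
      · simp only [mem_finOf, Equiv.coe_addRight, SetLike.mem_coe]
        exact ⟨fun hi => I.add_mem hi htI, fun hi => by simpa using I.sub_mem hi htI⟩
      · exact (χ.map_add_eq_mul i t).symm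
    have h2 : (∑ s ∈ finOf (I : Set R), χ s) * (χ t - 1) = 0 := by
      rw [mul_sub, hinv, mul_one, sub_self]
    rcases mul_eq_zero.1 h2 with h3 | h3
    · exact h3
    · exact absurd (sub_eq_zero.1 h3) ht

lemma classL_eq (x : R) : classL x = {s | s ∈ lgen x ∧ ∀ M ∈ maxROf (lgen x), s ∉ M} := by
  ext s
  simp only [classL, Set.mem_setOf_eq]
  constructor
  · intro hs
    refine ⟨hs ▸ mem_lgen_self s, fun M hM hsM => ?_⟩
    have h1 : lgen s ≤ M := lgen_le_iff.2 hsM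
    rw [hs] at h1
    exact ((maxROf_iff.1 hM).1 : M < lgen x).not_ge h1
  · rintro ⟨h1, h2⟩
    refine le_antisymm (lgen_le_iff.2 h1) ?_
    by_contra hc
    have hlt : lgen s < lgen x := lt_of_le_of_ne (lgen_le_iff.2 h1) (fun h => hc h.ge)
    obtain ⟨M, hM, hle⟩ := exists_coatom_between hlt
    exact h2 M hM (hle (mem_lgen_self s))

lemma mem_interIn {J : Submodule R R} {E : Set (Submodule R R)}
    {s : R} (hs : s ∈ J) : s ∈ interIn J E ↔ ∀ M ∈ E, s ∈ M := by
  rcases eq_or_ne E ∅ with rfl | hne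
  · simp [interIn, hs]
  · rw [interIn, if_neg hne, Submodule.mem_sInf]

lemma interIn_le {J : Submodule R R} {E : Set (Submodule R R)} (hE : E ⊆ maxROf J) :
    interIn J E ≤ J := by
  rcases eq_or_ne E ∅ with rfl | hne
  · simp [interIn]
  · obtain ⟨M, hM⟩ := Set.nonempty_iff_ne_empty.2 hne
    rw [interIn, if_neg hne]
    exact (sInf_le hM).trans (maxROf_iff.1 (hE hM)).1.le

lemma main_formula (χ : AddChar R ℂ) (x : R) (K : Submodule R R)
    (hK : (K : Set R) ⊆ (lgen x : Set R) ∩ {y | χ y = 1})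
    (hKmax : ∀ L : Submodule R R,
      (L : Set R) ⊆ (lgen x : Set R) ∩ {y | χ y = 1} → L ≤ K) :
    CchiL χ x = ∑ A ∈ ((Set.toFinite (maxROf (lgen x))).toFinset.powerset.filter
        (fun A : Finset (Submodule R R) => interIn (lgen x) (↑A : Set (Submodule R R)) ≤ K)),
      (-1:ℂ)^A.card * (Nat.card (interIn (lgen x) (↑A : Set (Submodule R R))) : ℂ) := by
  classical
  set J := lgen x with hJdef
  set 𝓜 : Finset (Submodule R R) := (Set.toFinite (maxROf J)).toFinset with hMdef
  have hMmem : ∀ {M : Submodule R R}, M ∈ 𝓜 ↔ M ∈ maxROf J :=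
    fun {M} => Set.Finite.mem_toFinset _
  have hAsub : ∀ A ∈ 𝓜.powerset, (↑A : Set (Submodule R R)) ⊆ maxROf J := by
    intro A hA M hM
    exact hMmem.1 (Finset.mem_powerset.1 hA (by exact_mod_cast hM))
  -- step 1
  have h0 : CchiL χ x = ∑ s ∈ finOf (J : Set R), (if (∀ M ∈ 𝓜, s ∉ M) then χ s else 0) := by
    rw [CchiL, finsum_mem_eq_finite_toFinset_sum _ (Set.toFinite _), ← Finset.sum_filter]
    apply Finset.sum_congr _ (fun _ _ => rfl)
    ext s
    simp only [Set.Finite.mem_toFinset, Finset.mem_filter, classL_eq, Set.mem_setOf_eq, mem_finOf]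
    constructor
    · rintro ⟨h1, h2⟩; exact ⟨h1, fun M hM => h2 M (hMmem.1 hM)⟩
    · rintro ⟨h1, h2⟩; exact ⟨h1, fun M hM => h2 M (hMmem.2 hM)⟩
  -- step 2
  have h1 : ∀ s ∈ finOf (J : Set R),
      (if (∀ M ∈ 𝓜, s ∉ M) then χ s else 0)
        = ∑ A ∈ 𝓜.powerset, ((-1:ℂ)^A.card * (if s ∈ interIn J ↑A then χ s else 0)) := by
    intro s hs
    have hsJ : s ∈ J := mem_finOf.1 hs
    set T : Finset (Submodule R R) := 𝓜.filter (fun M => s ∈ M) with hTdef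
    have hstep : ∀ A ∈ 𝓜.powerset,
        ((-1:ℂ)^A.card * (if s ∈ interIn J ↑A then χ s else 0))
          = (if A ⊆ T then (-1:ℂ)^A.card * χ s else 0) := by
      intro A hA
      have hmem : s ∈ interIn J ↑A ↔ A ⊆ T := by
        rw [mem_interIn hsJ]
        constructor
        · intro h M hM
          exact Finset.mem_filter.2 ⟨Finset.mem_powerset.1 hA hM, h M (by exact_mod_cast hM)⟩
        · intro h M hM
          exact (Finset.mem_filter.1 (h (by exact_mod_cast hM))).2
      rw [hmem]
      split <;> simp
    rw [Finset.sum_congr rfl hstep, ← Finset.sum_filter]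
    have hps : 𝓜.powerset.filter (fun A => A ⊆ T) = T.powerset := by
      ext A
      simp only [Finset.mem_filter, Finset.mem_powerset]
      exact ⟨fun h => h.2, fun h => ⟨h.trans (Finset.filter_subset _ _), h⟩⟩
    rw [hps, ← Finset.sum_mul]
    have hpow : (∑ A ∈ T.powerset, (-1:ℂ)^A.card) = if T = ∅ then 1 else 0 := by
      have hz := Finset.sum_powerset_neg_one_pow_card (x := T)
      have : (∑ A ∈ T.powerset, (-1:ℂ)^A.card)
          = ((∑ A ∈ T.powerset, (-1:ℤ)^A.card : ℤ) : ℂ) := by push_cast; rfl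
      rw [this, hz]
      split <;> simp
    rw [hpow]
    have hTiff : T = ∅ ↔ ∀ M ∈ 𝓜, s ∉ M := by
      rw [Finset.filter_eq_empty_iff]
    rw [hTdef] at hTiff
    by_cases hc : ∀ M ∈ 𝓜, s ∉ M
    · rw [if_pos hc, if_pos (hTiff.2 hc), one_mul]
    · rw [if_neg hc, if_neg (fun h => hc (hTiff.1 h)), zero_mul]
  rw [h0, Finset.sum_congr rfl h1, Finset.sum_comm]
  -- step 3
  have h2 : ∀ A ∈ 𝓜.powerset,
      (∑ s ∈ finOf (J : Set R), ((-1:ℂ)^A.card * (if s ∈ interIn J ↑A then χ s else 0)))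
        = (if interIn J ↑A ≤ K then ((-1:ℂ)^A.card * (Nat.card (interIn J (↑A : Set (Submodule R R))) : ℂ)) else 0) := by
    intro A hA
    have hsub : interIn J ↑A ≤ J := interIn_le (hAsub A hA)
    rw [← Finset.mul_sum, ← Finset.sum_filter]
    have hfin : (finOf (J : Set R)).filter (fun s => s ∈ interIn J ↑A)
        = finOf ((interIn J ↑A : Submodule R R) : Set R) := by
      ext s
      simp only [Finset.mem_filter, mem_finOf, SetLike.mem_coe]
      exact ⟨fun h => h.2, fun h => ⟨hsub h, h⟩⟩
    rw [hfin, char_sum χ hK hKmax hsub]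
    split <;> simp
  rw [Finset.sum_congr rfl h2, ← Finset.sum_filter]

end Aux

theorem stmt0 [Ring R] [Fintype R] (χ : AddChar R ℂ) (x : R) (K : Submodule R R)
    (hK : (K : Set R) ⊆ (lgen x : Set R) ∩ {y | χ y = 1})
    (hKmax : ∀ L : Submodule R R,
      (L : Set R) ⊆ (lgen x : Set R) ∩ {y | χ y = 1} → L ≤ K) :
    (K = lgen x → CchiL χ x = Nat.card (classL x)) ∧
    ((K ≠ lgen x ∧ ∃ E : Set (Submodule R R),
        E ⊆ maxROf (lgen x) ∧ E.Nonempty ∧ interIn (lgen x) E = K) →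
      CchiL χ x =
        ∑ᶠ E ∈ {E : Set (Submodule R R) |
            E ⊆ maxROf (lgen x) ∧ interIn (lgen x) E ≤ K},
          ((-1 : ℂ) ^ (Nat.card E) * (Nat.card (interIn (lgen x) E) : ℂ))) ∧
    ((K ≠ lgen x ∧ ¬ ∃ E : Set (Submodule R R),
        E ⊆ maxROf (lgen x) ∧ E.Nonempty ∧ interIn (lgen x) E = K) →
      CchiL χ x = 0) := by
  have hKJ : K ≤ lgen x := fun y hy => (hK hy).1
  refine ⟨?_, ?_, ?_⟩
  · -- part (a)
    intro hKeq
    rw [CchiL, finsum_mem_eq_finite_toFinset_sum _ (Set.toFinite _)]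
    have hone : ∀ s ∈ (Set.toFinite (classL x)).toFinset, χ s = 1 := by
      intro s hs
      have hs' : s ∈ classL x := (Set.Finite.mem_toFinset _).1 hs
      have hsK : s ∈ K := by rw [hKeq]; exact hs' ▸ mem_lgen_self s
      exact (hK hsK).2
    rw [Finset.sum_congr rfl hone, Finset.sum_const, nsmul_eq_mul, mul_one]
    congr 1
    rw [Nat.card_coe_set_eq, Set.ncard_eq_toFinset_card _ (Set.toFinite _)]
  · -- part (b)
    rintro ⟨-, -⟩
    rw [main_formula χ x K hK hKmax,
      finsum_mem_eq_finite_toFinset_sum _ (Set.toFinite _)]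
    refine Finset.sum_nbij' (fun A : Finset (Submodule R R) => (↑A : Set (Submodule R R)))
      (fun E : Set (Submodule R R) => (Set.toFinite E).toFinset) ?_ ?_ ?_ ?_ ?_
    · intro A hA
      rw [Finset.mem_filter, Finset.mem_powerset] at hA
      rw [Set.Finite.mem_toFinset]
      refine ⟨fun M hM => ?_, hA.2⟩
      exact (Set.Finite.mem_toFinset _).1 (hA.1 (by exact_mod_cast hM))
    · intro E hE
      rw [Set.Finite.mem_toFinset] at hE
      rw [Finset.mem_filter, Finset.mem_powerset]
      constructor
      · intro M hM
        rw [Set.Finite.mem_toFinset]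
        exact hE.1 ((Set.Finite.mem_toFinset _).1 hM)
      · rw [Set.Finite.coe_toFinset]
        exact hE.2
    · intro A hA
      ext M
      rw [Set.Finite.mem_toFinset, Finset.mem_coe]
    · intro E hE
      exact Set.Finite.coe_toFinset _
    · intro A hA
      rw [Nat.card_coe_set_eq, Set.ncard_coe_finset]
  · -- part (c)
    rintro ⟨hne, hE⟩
    set J := lgen x with hJdef
    have hKlt : K < J := lt_of_le_of_ne hKJ hne
    obtain ⟨M₀, hM₀, -⟩ := exists_coatom_between hKlt
    have hMne : (maxROf J).Nonempty := ⟨M₀, hM₀⟩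
    have hNK : ¬ (sInf (maxROf J) ≤ K) := by
      intro hNK
      obtain ⟨hne', hinter⟩ := key_inter hMne hNK hKlt
      refine hE ⟨{M | M ∈ maxROf J ∧ K ≤ M}, fun M hM => hM.1, hne', ?_⟩
      rw [interIn, if_neg (Set.nonempty_iff_ne_empty.1 hne')]
      exact hinter
    have hNJ : sInf (maxROf J) ≤ J := (sInf_le hM₀).trans (maxROf_iff.1 hM₀).1.le
    obtain ⟨t, htN, ht⟩ : ∃ t ∈ sInf (maxROf J), χ t ≠ 1 := by
      by_contra hc
      push_neg at hc
      exact hNK (hKmax _ (fun y hy => ⟨hNJ hy, hc y hy⟩))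
    have htJ : t ∈ J := hNJ htN
    have htM : ∀ M ∈ maxROf J, t ∈ M := fun M hM => (sInf_le hM : _ ≤ M) htN
    have htrans : ∀ s, s ∈ classL x → s + t ∈ classL x := by
      intro s hs
      rw [classL_eq] at hs ⊢
      refine ⟨J.add_mem hs.1 htJ, fun M hM hmem => ?_⟩
      exact hs.2 M hM (by simpa using M.sub_mem hmem (htM M hM))
    have htrans' : ∀ s, s ∈ classL x → s - t ∈ classL x := by
      intro s hs
      rw [classL_eq] at hs ⊢
      refine ⟨J.sub_mem hs.1 htJ, fun M hM hmem => ?_⟩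
      exact hs.2 M hM (by simpa using M.add_mem hmem (htM M hM))
    have hinv : CchiL χ x * χ t = CchiL χ x := by
      rw [CchiL, finsum_mem_eq_finite_toFinset_sum _ (Set.toFinite _), Finset.sum_mul]
      refine Finset.sum_equiv (Equiv.addRight t) (fun i => ?_) (fun i hi => ?_)
      · simp only [Set.Finite.mem_toFinset, Equiv.coe_addRight]
        exact ⟨fun h => htrans i h, fun h => by simpa using htrans' (i + t) h⟩
      · exact (χ.map_add_eq_mul i t).symm
    have h2 : CchiL χ x * (χ t - 1) = 0 := by
      rw [mul_sub, hinv, mul_one, sub_self]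
    rcases mul_eq_zero.1 h2 with h3 | h3
    · exact h3
    · exact absurd (sub_eq_zero.1 h3) ht
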